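/- For every ε > 0 and integers n ≥ 2, k ≥ 2, there exists a randomized mechanism M that maps each weighted graph G on a fixed n-element vertex set V with k distinct terminals s₁, …, s_k to a probability distribution over multiway k-cuts of G, such that (i) M is (ε, 0)-differentially private with respect to edge-neighboring graphs, and (ii) there is an absolute constant C such that for every input graph G, with probability at least 1 − 1/n, the multiway k-cut output by M has weight in G at most 2·OPT + C·n·log(k)/ε, where OPT is the minimum weight of a multiway k-cut of G. -/

import Mathlib

open Finset
open scoped ENNReal

/-- A valid weight function of a weighted graph: nonnegative, symmetric and zero
on the diagonal. -/
def IsWeight {V : Type} (w : V → V → ℝ) : Prop :=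
  (∀ u v, 0 ≤ w u v) ∧ (∀ u v, w u v = w v u) ∧ (∀ u, w u u = 0)

/-- Two weight functions on the same vertex set are (edge-)neighboring if they agree on
all but one unordered pair of vertices, where they differ by at most `1`. -/
def Neighboring {V : Type} (w w' : V → V → ℝ) : Prop :=
  ∃ a b : V, |w a b - w' a b| ≤ 1 ∧
    ∀ u v, ¬((u = a ∧ v = b) ∨ (u = b ∧ v = a)) → w u v = w' u v

/-- `C` is a multiway `k`-cut for the terminals `ts 0, …, ts (k−1)`: there are pairwise
disjoint sets `P i` covering `V` with `ts i ∈ P i`, and `C` is exactly the set of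
unordered pairs joining two different parts. -/
def IsMultiwayCut {V : Type} [Fintype V] [DecidableEq V] {k : ℕ} (ts : Fin k → V)
    (C : Finset (Sym2 V)) : Prop :=
  ∃ P : Fin k → Finset V,
    (∀ i j, i ≠ j → Disjoint (P i) (P j)) ∧
    (∀ i, ts i ∈ P i) ∧
    Finset.univ.biUnion P = Finset.univ ∧
    (↑C : Set (Sym2 V)) =
      {p | ∃ u v : V, ∃ i j : Fin k, p = s(u, v) ∧ i ≠ j ∧ u ∈ P i ∧ v ∈ P j}

/-- The total weight of a set of unordered vertex pairs (for a symmetric weight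
function vanishing on the diagonal, this is the sum of the weights of the pairs). -/
noncomputable def pairsWeight {V : Type} [Fintype V] [DecidableEq V] (w : V → V → ℝ)
    (C : Finset (Sym2 V)) : ℝ :=
  (1 / 2) * ∑ u : V, ∑ v : V, if s(u, v) ∈ C then w u v else 0

section Helpers

variable {V : Type} [Fintype V] [DecidableEq V] {k : ℕ}

open scoped Classical

/-- The set of crossing pairs of a partition. -/
def crossSet (P : Fin k → Finset V) : Set (Sym2 V) :=
  {p | ∃ u v : V, ∃ i j : Fin k, p = s(u, v) ∧ i ≠ j ∧ u ∈ P i ∧ v ∈ P j}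

noncomputable def cutOf (P : Fin k → Finset V) : Finset (Sym2 V) :=
  Finset.univ.filter (fun p => p ∈ crossSet P)

lemma coe_cutOf (P : Fin k → Finset V) : (↑(cutOf P) : Set (Sym2 V)) = crossSet P := by
  ext p; simp [cutOf]

/-- parts from a labelling -/
noncomputable def partOf (f : V → Fin k) (i : Fin k) : Finset V :=
  Finset.univ.filter (fun v => f v = i)

lemma mem_partOf {f : V → Fin k} {v : V} {i : Fin k} : v ∈ partOf f i ↔ f v = i := by
  simp [partOf]

lemma isMultiwayCut_cutOf_partOf (ts : Fin k → V) (f : V → Fin k)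
    (hf : ∀ i, f (ts i) = i) : IsMultiwayCut ts (cutOf (partOf f)) := by
  refine ⟨partOf f, ?_, ?_, ?_, coe_cutOf _⟩
  · intro i j hij
    refine Finset.disjoint_left.2 fun v hv hv' => hij ?_
    rw [mem_partOf] at hv hv'; rw [← hv, hv']
  · intro i; rw [mem_partOf]; exact hf i
  · apply Finset.eq_univ_of_forall
    intro v
    exact Finset.mem_biUnion.2 ⟨f v, Finset.mem_univ _, mem_partOf.2 rfl⟩

lemma exists_label {ts : Fin k → V} {C : Finset (Sym2 V)} (h : IsMultiwayCut ts C) :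
    ∃ f : V → Fin k, C = cutOf (partOf f) := by
  obtain ⟨P, hdis, hmem, hcov, hco⟩ := h
  have hex : ∀ v : V, ∃ i, v ∈ P i := by
    intro v
    have : v ∈ Finset.univ.biUnion P := by rw [hcov]; exact Finset.mem_univ v
    obtain ⟨i, -, hi⟩ := Finset.mem_biUnion.1 this
    exact ⟨i, hi⟩
  choose f hfv using hex
  have hP : P = partOf f := by
    funext i; ext v
    rw [mem_partOf]
    constructor
    · intro hv
      by_contra hne
      exact (Finset.disjoint_left.1 (hdis _ _ hne) (hfv v)) hv
    · intro hv; rw [← hv]; exact hfv v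
  refine ⟨f, Finset.coe_injective ?_⟩
  rw [hco, coe_cutOf, crossSet, hP]

lemma exists_multiwayCut (ts : Fin k → V) (hts : Function.Injective ts) (hk : 0 < k) :
    ∃ C : Finset (Sym2 V), IsMultiwayCut ts C := by
  have : ∃ f : V → Fin k, ∀ i, f (ts i) = i := by
    refine ⟨fun v => if h : ∃ i, ts i = v then h.choose else ⟨0, hk⟩, fun i => ?_⟩
    have h : ∃ j, ts j = ts i := ⟨i, rfl⟩
    simp only [dif_pos h]
    exact hts h.choose_spec
  obtain ⟨f, hf⟩ := this
  exact ⟨_, isMultiwayCut_cutOf_partOf ts f hf⟩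

lemma card_cuts_le (ts : Fin k → V) (n : ℕ) (hcard : Fintype.card V = n) :
    (Finset.univ.filter (fun C : Finset (Sym2 V) => IsMultiwayCut ts C)).card ≤ k ^ n := by
  have hsub : (Finset.univ.filter (fun C : Finset (Sym2 V) => IsMultiwayCut ts C)) ⊆
      Finset.image (fun f : V → Fin k => cutOf (partOf f)) Finset.univ := by
    intro C hC
    rw [Finset.mem_filter] at hC
    obtain ⟨f, hf⟩ := exists_label hC.2
    exact Finset.mem_image.2 ⟨f, Finset.mem_univ _, hf.symm⟩
  calc _ ≤ (Finset.image (fun f : V → Fin k => cutOf (partOf f)) Finset.univ).card :=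
        Finset.card_le_card hsub
    _ ≤ (Finset.univ : Finset (V → Fin k)).card := Finset.card_image_le
    _ = k ^ n := by
        rw [Finset.card_univ, Fintype.card_fun, Fintype.card_fin, hcard]

lemma pairsWeight_nonneg {w : V → V → ℝ} (hw : IsWeight w) (C : Finset (Sym2 V)) :
    0 ≤ pairsWeight w C := by
  apply mul_nonneg (by norm_num)
  refine Finset.sum_nonneg fun u _ => Finset.sum_nonneg fun v _ => ?_
  split
  · exact hw.1 u v
  · exact le_rfl

lemma pairsWeight_diff_le {w w' : V → V → ℝ} (hw : IsWeight w) (hw' : IsWeight w')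
    (h : Neighboring w w') (C : Finset (Sym2 V)) :
    |pairsWeight w C - pairsWeight w' C| ≤ 1 := by
  obtain ⟨a, b, hab, hoth⟩ := h
  set d : V → V → ℝ := fun u v =>
    (if s(u, v) ∈ C then w u v else 0) - (if s(u, v) ∈ C then w' u v else 0)
    with hd
  have key : ∀ u v : V, |d u v| ≤
      (if u = a ∧ v = b then (1:ℝ) else 0) + (if u = b ∧ v = a then (1:ℝ) else 0) := by
    intro u v
    have t1 : (0:ℝ) ≤ if u = a ∧ v = b then (1:ℝ) else 0 := by split <;> norm_num
    have t2 : (0:ℝ) ≤ if u = b ∧ v = a then (1:ℝ) else 0 := by split <;> norm_num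
    by_cases hc : (u = a ∧ v = b) ∨ (u = b ∧ v = a)
    · have h1 : |w u v - w' u v| ≤ 1 := by
        rcases hc with ⟨hu, hv⟩ | ⟨hu, hv⟩
        · subst hu; subst hv; exact hab
        · subst hu; subst hv; rw [hw.2.1, hw'.2.1]; exact hab
      have h2 : (1:ℝ) ≤ (if u = a ∧ v = b then (1:ℝ) else 0) +
          (if u = b ∧ v = a then (1:ℝ) else 0) := by
        rcases hc with hc | hc
        · rw [if_pos hc]; linarith
        · rw [if_pos hc]; linarith
      by_cases hm : s(u, v) ∈ C
      · simp only [hd, if_pos hm]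
        exact h1.trans h2
      · simp only [hd, if_neg hm, sub_zero, abs_zero]
        linarith
    · simp only [hd, hoth u v hc, sub_self, abs_zero]
      linarith
  have hsplit : pairsWeight w C - pairsWeight w' C = (1/2) * ∑ u : V, ∑ v : V, d u v := by
    rw [pairsWeight, pairsWeight, ← mul_sub]
    congr 1
    rw [← Finset.sum_sub_distrib]
    exact Finset.sum_congr rfl fun u _ => (Finset.sum_sub_distrib _ _).symm
  have habs : |∑ u : V, ∑ v : V, d u v| ≤ ∑ u : V, ∑ v : V, |d u v| :=
    (Finset.abs_sum_le_sum_abs _ _).trans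
      (Finset.sum_le_sum fun u _ => Finset.abs_sum_le_sum_abs _ _)
  have hsum2 : ∑ u : V, ∑ v : V, ((if u = a ∧ v = b then (1:ℝ) else 0) +
      (if u = b ∧ v = a then (1:ℝ) else 0)) = 2 := by
    simp only [Finset.sum_add_distrib, ite_and, Finset.sum_ite_eq', Finset.mem_univ, if_true]
    norm_num
  have hkey : ∑ u : V, ∑ v : V, |d u v| ≤ 2 := by
    rw [← hsum2]
    exact Finset.sum_le_sum fun u _ => Finset.sum_le_sum fun v _ => key u v
  rw [hsplit, abs_mul]
  have : |(1:ℝ)/2| = 1/2 := by norm_num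
  rw [this]
  nlinarith [habs.trans hkey, abs_nonneg (∑ u : V, ∑ v : V, d u v)]

end Helpers

lemma Neighboring.symm {V : Type} {w w' : V → V → ℝ} (h : Neighboring w w') :
    Neighboring w' w := by
  obtain ⟨a, b, h1, h2⟩ := h
  exact ⟨a, b, by rwa [abs_sub_comm], fun u v hc => (h2 u v hc).symm⟩


/-- For every `ε > 0`, `n ≥ 2`, `k ≥ 2` there is a randomized mechanism
mapping weighted graphs on a fixed `n`-element vertex set with `k` distinct terminals to
distributions over multiway `k`-cuts which (i) is `(ε, 0)`-differentially private w.r.t.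
edge-neighboring graphs, and (ii) for some absolute constant `C`, on every input graph
outputs, with probability at least `1 − 1/n`, a multiway `k`-cut of weight at most
`2·OPT + C·n·log(k)/ε`. -/
theorem dp_multiway_cut_exists (ε : ℝ) (hε : 0 < ε) (n k : ℕ) (hn : 2 ≤ n) (hk : 2 ≤ k)
    (V : Type) [Fintype V] [DecidableEq V] (hcard : Fintype.card V = n)
    (ts : Fin k → V) (hts : Function.Injective ts) :
    ∃ M : (V → V → ℝ) → PMF (Finset (Sym2 V)),
      -- (i) (ε, 0)-differential privacy
      (∀ w w' : V → V → ℝ, IsWeight w → IsWeight w' → Neighboring w w' →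
        ∀ O : Set (Finset (Sym2 V)),
          (M w).toOuterMeasure O ≤ ENNReal.ofReal (Real.exp ε) * (M w').toOuterMeasure O) ∧
      -- the output is always a multiway k-cut
      (∀ w : V → V → ℝ, IsWeight w → ∀ Cs ∈ (M w).support, IsMultiwayCut ts Cs) ∧
      -- (ii) accuracy with an absolute constant C
      (∃ C : ℝ, ∀ w : V → V → ℝ, IsWeight w →
        ENNReal.ofReal (1 - (n : ℝ)⁻¹) ≤
          (M w).toOuterMeasure {Cs : Finset (Sym2 V) |
            pairsWeight w Cs ≤
              2 * sInf {r : ℝ | ∃ D : Finset (Sym2 V), IsMultiwayCut ts D ∧ r = pairsWeight w D}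
                + C * n * Real.log k / ε}) := by
  classical
  have hk0 : 0 < k := by omega
  obtain ⟨C0, hC0⟩ := exists_multiwayCut ts hts hk0
  set g : (V → V → ℝ) → Finset (Sym2 V) → ℝ≥0∞ := fun w C =>
    if IsMultiwayCut ts C then ENNReal.ofReal (Real.exp (-(ε/2) * pairsWeight w C)) else 0
    with hg
  have hg_ne_top : ∀ w C, g w C ≠ ⊤ := by
    intro w C; simp only [hg]; split <;> simp
  have hZ_ne_top : ∀ w, (∑' C, g w C) ≠ ⊤ := by
    intro w; rw [tsum_fintype]
    exact (ENNReal.sum_lt_top.2 fun C _ => lt_top_iff_ne_top.2 (hg_ne_top w C)).ne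
  have hgC0 : ∀ w, 0 < g w C0 := by
    intro w; simp only [hg, if_pos hC0]; exact ENNReal.ofReal_pos.2 (Real.exp_pos _)
  have hZ_ne_zero : ∀ w, (∑' C, g w C) ≠ 0 := fun w =>
    ((hgC0 w).trans_le (ENNReal.le_tsum C0)).ne'
  -- pointwise comparison
  have hptg : ∀ (w1 w2 : V → V → ℝ), IsWeight w1 → IsWeight w2 → Neighboring w1 w2 →
      ∀ C, g w1 C ≤ ENNReal.ofReal (Real.exp (ε/2)) * g w2 C := by
    intro w1 w2 h1 h2 hn12 C
    simp only [hg]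
    split
    case isTrue h =>
      rw [← ENNReal.ofReal_mul (Real.exp_nonneg _), ← Real.exp_add]
      apply ENNReal.ofReal_le_ofReal
      apply Real.exp_le_exp.2
      have hd := abs_le.1 (pairsWeight_diff_le h1 h2 hn12 C)
      nlinarith [hd.1, hd.2, hε.le]
    case isFalse h => simp
  refine ⟨fun w => PMF.normalize (g w) (hZ_ne_zero w) (hZ_ne_top w), ?_, ?_, ?_⟩
  · -- DP
    intro w w' hw hw' hnb O
    set c := ENNReal.ofReal (Real.exp (ε/2)) with hc
    have hc0 : c ≠ 0 := by
      simp [hc, ENNReal.ofReal_eq_zero, not_le, Real.exp_pos]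
    have hctop : c ≠ ⊤ := ENNReal.ofReal_ne_top
    have hZle : (∑' C, g w' C) ≤ c * (∑' C, g w C) := by
      rw [← ENNReal.tsum_mul_left]
      exact ENNReal.tsum_le_tsum fun C => hptg w' w hw' hw hnb.symm C
    have hinv : (∑' C, g w C)⁻¹ ≤ c * (∑' C, g w' C)⁻¹ := by
      have h1 : (c * (∑' C, g w C))⁻¹ ≤ (∑' C, g w' C)⁻¹ := ENNReal.inv_le_inv.2 hZle
      have h2 : (c * (∑' C, g w C))⁻¹ = c⁻¹ * (∑' C, g w C)⁻¹ :=
        ENNReal.mul_inv (Or.inl hc0) (Or.inl hctop)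
      calc (∑' C, g w C)⁻¹ = (c * c⁻¹) * (∑' C, g w C)⁻¹ := by
            rw [ENNReal.mul_inv_cancel hc0 hctop, one_mul]
        _ = c * (c * (∑' C, g w C))⁻¹ := by rw [h2, mul_assoc]
        _ ≤ c * (∑' C, g w' C)⁻¹ := mul_le_mul_right h1 c
    have hmass : ∀ C, (PMF.normalize (g w) (hZ_ne_zero w) (hZ_ne_top w)) C ≤
        ENNReal.ofReal (Real.exp ε) * (PMF.normalize (g w') (hZ_ne_zero w') (hZ_ne_top w')) C := by
      intro C
      rw [PMF.normalize_apply, PMF.normalize_apply]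
      calc g w C * (∑' C', g w C')⁻¹
          ≤ (c * g w' C) * (c * (∑' C', g w' C')⁻¹) :=
            mul_le_mul' (hptg w w' hw hw' hnb C) hinv
        _ = (c * c) * (g w' C * (∑' C', g w' C')⁻¹) := by ring
        _ = ENNReal.ofReal (Real.exp ε) * (g w' C * (∑' C', g w' C')⁻¹) := by
            rw [hc, ← ENNReal.ofReal_mul (Real.exp_nonneg _), ← Real.exp_add, add_halves]
    rw [PMF.toOuterMeasure_apply, PMF.toOuterMeasure_apply, ← ENNReal.tsum_mul_left]
    refine ENNReal.tsum_le_tsum fun C => ?_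
    by_cases hCO : C ∈ O
    · simp only [Set.indicator_of_mem hCO]; exact hmass C
    · simp [Set.indicator_of_notMem hCO]
  · -- support
    intro w hw Cs hCs
    rw [PMF.support_normalize] at hCs
    by_contra hcut
    apply hCs
    simp [hg, hcut]
  · -- accuracy
    refine ⟨4, fun w hw => ?_⟩
    set OPTset := {r : ℝ | ∃ D : Finset (Sym2 V), IsMultiwayCut ts D ∧ r = pairsWeight w D}
      with hOPTset
    set OPT := sInf OPTset with hOPTdef
    set T : ℝ := 4 * n * Real.log k / ε with hT
    have hfin : OPTset.Finite := by
      apply (Set.finite_range (pairsWeight w)).subset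
      rintro r ⟨D, -, rfl⟩; exact ⟨D, rfl⟩
    have hne : OPTset.Nonempty := ⟨pairsWeight w C0, C0, hC0, rfl⟩
    obtain ⟨D0, hD0cut, hD0⟩ := hne.csInf_mem hfin
    have hOPT0 : 0 ≤ OPT := by rw [hOPTdef, hD0]; exact pairsWeight_nonneg hw D0
    set p := PMF.normalize (g w) (hZ_ne_zero w) (hZ_ne_top w) with hp
    set S : Set (Finset (Sym2 V)) := {Cs | pairsWeight w Cs ≤ 2 * OPT + 4 * n * Real.log k / ε}
      with hS
    show ENNReal.ofReal (1 - (n : ℝ)⁻¹) ≤ p.toOuterMeasure S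
    have hadd : p.toOuterMeasure S + p.toOuterMeasure Sᶜ = 1 := by
      rw [PMF.toOuterMeasure_apply, PMF.toOuterMeasure_apply, ← ENNReal.tsum_add,
        ← PMF.tsum_coe p]
      exact tsum_congr fun C => Set.indicator_self_add_compl_apply S p C
    -- bound on the bad event
    have hbad : p.toOuterMeasure Sᶜ ≤ ENNReal.ofReal (n : ℝ)⁻¹ := by
      set Z := ∑' C, g w C with hZ
      set Badfin : Finset (Finset (Sym2 V)) := Finset.univ.filter
        (fun C => IsMultiwayCut ts C ∧ ¬ (pairsWeight w C ≤ 2 * OPT + T)) with hBadfin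
      set b : ℝ≥0∞ := ENNReal.ofReal (Real.exp (-(ε/2) * (OPT + T))) * Z⁻¹ with hb
      have hεne : ε ≠ 0 := ne_of_gt hε
      -- pointwise bound on bad cuts
      have hpt : ∀ C, (Sᶜ).indicator p C ≤ if C ∈ Badfin then b else 0 := by
        intro C
        by_cases hCS : C ∈ Sᶜ
        · rw [Set.indicator_of_mem hCS]
          have hCbad : ¬ (pairsWeight w C ≤ 2 * OPT + T) := hCS
          by_cases hcut : IsMultiwayCut ts C
          · have hCmem : C ∈ Badfin := by
              rw [hBadfin, Finset.mem_filter]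
              exact ⟨Finset.mem_univ _, hcut, hCbad⟩
            rw [if_pos hCmem, hp, PMF.normalize_apply, hb]
            apply mul_le_mul_left
            rw [hg]
            simp only [if_pos hcut]
            apply ENNReal.ofReal_le_ofReal
            apply Real.exp_le_exp.2
            push_neg at hCbad
            have hge : OPT + T ≤ pairsWeight w C := by linarith
            nlinarith [hε.le]
          · rw [hp, PMF.normalize_apply, hg]
            simp only [if_neg hcut, zero_mul]
            exact zero_le
        · rw [Set.indicator_of_notMem hCS]; exact zero_le
      -- cardinality bound
      have hcardle : Badfin.card ≤ k ^ n := by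
        refine le_trans (Finset.card_le_card ?_) (card_cuts_le ts n hcard)
        intro C hC
        rw [hBadfin, Finset.mem_filter] at hC
        exact Finset.mem_filter.2 ⟨Finset.mem_univ _, hC.2.1⟩
      -- bound on the normalizing constant
      have hZ0 : ENNReal.ofReal (Real.exp (-(ε/2) * OPT)) ≤ Z := by
        have : ENNReal.ofReal (Real.exp (-(ε/2) * OPT)) = g w D0 := by
          rw [hg]; simp only [if_pos hD0cut, hOPTdef, hD0]
        rw [this, hZ]
        exact ENNReal.le_tsum D0
      have hZinv : Z⁻¹ ≤ ENNReal.ofReal (Real.exp ((ε/2) * OPT)) := by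
        calc Z⁻¹ ≤ (ENNReal.ofReal (Real.exp (-(ε/2) * OPT)))⁻¹ := ENNReal.inv_le_inv.2 hZ0
          _ = ENNReal.ofReal ((Real.exp (-(ε/2) * OPT))⁻¹) :=
              (ENNReal.ofReal_inv_of_pos (Real.exp_pos _)).symm
          _ = ENNReal.ofReal (Real.exp ((ε/2) * OPT)) := by
              rw [← Real.exp_neg, neg_mul, neg_neg]
      have hbb : b ≤ ENNReal.ofReal (Real.exp (-(ε/2) * T)) := by
        calc b ≤ ENNReal.ofReal (Real.exp (-(ε/2) * (OPT + T))) *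
            ENNReal.ofReal (Real.exp ((ε/2) * OPT)) := mul_le_mul_right hZinv _
          _ = ENNReal.ofReal (Real.exp (-(ε/2) * T)) := by
              rw [← ENNReal.ofReal_mul (Real.exp_nonneg _), ← Real.exp_add]
              congr 1
              ring
      -- the real-number inequality
      have hTe : -(ε/2) * T = -(((2*n : ℕ) : ℝ) * Real.log k) := by
        rw [hT]; push_cast; field_simp; ring_nf
      have hkR : (0:ℝ) < (k:ℝ) := by exact_mod_cast hk0
      have hnR : (0:ℝ) < (n:ℝ) := by exact_mod_cast (by omega : 0 < n)
      have hexp : Real.exp (-(ε/2) * T) = ((k:ℝ) ^ (2*n))⁻¹ := by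
        rw [hTe, Real.exp_neg, Real.exp_nat_mul, Real.exp_log hkR]
      have hnkn : (n:ℝ) ≤ (k:ℝ) ^ n := by
        have h1 : n ≤ 2 ^ n := Nat.le_of_lt (Nat.lt_two_pow_self (n := n))
        have h2 : 2 ^ n ≤ k ^ n := Nat.pow_le_pow_left hk n
        exact_mod_cast h1.trans h2
      have hknpos : (0:ℝ) < (k:ℝ) ^ n := by positivity
      have hreal : ((k ^ n : ℕ) : ℝ) * Real.exp (-(ε/2) * T) ≤ (n:ℝ)⁻¹ := by
        rw [hexp]
        push_cast
        have h2n : (k:ℝ) ^ (2*n) = (k:ℝ) ^ n * (k:ℝ) ^ n := by rw [two_mul, pow_add]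
        rw [h2n]
        have heq : (k:ℝ) ^ n * ((k:ℝ) ^ n * (k:ℝ) ^ n)⁻¹ = ((k:ℝ) ^ n)⁻¹ := by
          field_simp
        rw [heq]
        exact inv_anti₀ hnR hnkn
      -- put everything together
      calc p.toOuterMeasure Sᶜ = ∑' C, (Sᶜ).indicator p C := PMF.toOuterMeasure_apply p Sᶜ
        _ ≤ ∑' C, (if C ∈ Badfin then b else 0) := ENNReal.tsum_le_tsum hpt
        _ = ∑ C ∈ Badfin, b := by
            rw [tsum_fintype, Finset.sum_ite_mem, Finset.univ_inter]
        _ = Badfin.card • b := Finset.sum_const b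
        _ = (Badfin.card : ℝ≥0∞) * b := nsmul_eq_mul _ _
        _ ≤ ((k ^ n : ℕ) : ℝ≥0∞) * ENNReal.ofReal (Real.exp (-(ε/2) * T)) :=
            mul_le_mul' (Nat.cast_le.2 hcardle) hbb
        _ = ENNReal.ofReal (((k ^ n : ℕ) : ℝ) * Real.exp (-(ε/2) * T)) := by
            rw [ENNReal.ofReal_mul (by positivity), ENNReal.ofReal_natCast]
        _ ≤ ENNReal.ofReal (n : ℝ)⁻¹ := ENNReal.ofReal_le_ofReal hreal

    have hle1 : p.toOuterMeasure Sᶜ ≠ ⊤ := by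
      intro h; rw [h] at hadd; simp at hadd
    have hSeq : p.toOuterMeasure S = 1 - p.toOuterMeasure Sᶜ :=
      ENNReal.eq_sub_of_add_eq hle1 hadd
    rw [hSeq]
    calc ENNReal.ofReal (1 - (n : ℝ)⁻¹)
        = 1 - ENNReal.ofReal (n : ℝ)⁻¹ := by
          rw [ENNReal.ofReal_sub _ (by positivity), ENNReal.ofReal_one]
      _ ≤ 1 - p.toOuterMeasure Sᶜ := tsub_le_tsub_left hbad 1
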